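/- Let b : [t₀,T] → ℝ be m-times continuously differentiable, let c₁,…,c_m > 0, and define recursively ψ₀ = b and ψᵢ(t) = ψᵢ₋₁'(t) + cᵢ ψᵢ₋₁(t) for i = 1,…,m. If ψ_m(t) ≥ 0 for all t ∈ [t₀, T] and ψᵢ(t₀) ≥ 0 for all i ∈ {0,…,m-1}, then b(t) ≥ 0 for all t ∈ [t₀, T]. -/

import Mathlib

lemma gronwall_nonneg {a b : ℝ} {c : ℝ} (f f' : ℝ → ℝ)
    (hd : ∀ t ∈ Set.Icc a b, HasDerivAt f (f' t) t)
    (h : ∀ t ∈ Set.Icc a b, 0 ≤ f' t + c * f t)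
    (h0 : 0 ≤ f a) : ∀ t ∈ Set.Icc a b, 0 ≤ f t := by
  intro t ht
  set g : ℝ → ℝ := fun t => Real.exp (c * t) * f t with hg
  have hgd : ∀ s ∈ Set.Icc a b,
      HasDerivAt g (Real.exp (c * s) * (f' s + c * f s)) s := by
    intro s hs
    have h1 : HasDerivAt (fun t => Real.exp (c * t)) (c * Real.exp (c * s)) s := by
      have := (Real.hasDerivAt_exp (c * s)).comp s ((hasDerivAt_id s).const_mul c)
      exact this.congr_deriv (by ring)
    have := h1.mul (hd s hs)
    exact this.congr_deriv (by ring)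
  have mono : MonotoneOn g (Set.Icc a b) := by
    apply monotoneOn_of_deriv_nonneg (convex_Icc a b)
    · exact fun s hs => (hgd s hs).continuousAt.continuousWithinAt
    · intro s hs
      rw [interior_Icc] at hs
      exact (hgd s (Set.mem_Icc_of_Ioo hs)).differentiableAt.differentiableWithinAt
    · intro s hs
      rw [interior_Icc] at hs
      rw [(hgd s (Set.mem_Icc_of_Ioo hs)).deriv]
      exact mul_nonneg (Real.exp_pos _).le (h s (Set.mem_Icc_of_Ioo hs))
  have ha : a ∈ Set.Icc a b := ⟨le_refl a, ht.1.trans ht.2⟩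
  have h2 : g a ≤ g t := mono ha ht ht.1
  have h3 : 0 ≤ g t := le_trans (mul_nonneg (Real.exp_pos _).le h0) h2
  simp only [hg] at h3
  nlinarith [Real.exp_pos (c * t), h3]

theorem hocbf_recursion
    {t₀ T : ℝ} (hT : t₀ ≤ T) {m : ℕ} (hm : 0 < m)
    (b : ℝ → ℝ) (c : Fin m → ℝ) (hc : ∀ i, 0 < c i)
    (ψ ψ' : ℕ → ℝ → ℝ)
    (hψ0 : ψ 0 = b)
    (hderiv : ∀ i < m, ∀ t ∈ Set.Icc t₀ T, HasDerivAt (ψ i) (ψ' i t) t)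
    (hcont : ∀ i < m, ContinuousOn (ψ' i) (Set.Icc t₀ T))
    (hrec : ∀ i : Fin m, ∀ t ∈ Set.Icc t₀ T,
      ψ (i + 1) t = ψ' i t + c i * ψ i t)
    (hψm : ∀ t ∈ Set.Icc t₀ T, 0 ≤ ψ m t)
    (hinit : ∀ i < m, 0 ≤ ψ i t₀) :
    ∀ t ∈ Set.Icc t₀ T, 0 ≤ b t := by
  have key : ∀ j, j ≤ m → ∀ t ∈ Set.Icc t₀ T, 0 ≤ ψ (m - j) t := by
    intro j
    induction j with
    | zero => simpa using hψm
    | succ k ih =>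
      intro hk t ht
      have hk' : k ≤ m := Nat.le_of_succ_le hk
      set i := m - (k + 1) with hi
      have him : i < m := by omega
      have hsucc : i + 1 = m - k := by omega
      refine gronwall_nonneg (c := c ⟨i, him⟩) (ψ i) (ψ' i) (hderiv i him) ?_ (hinit i him) t ht
      intro s hs
      have := hrec ⟨i, him⟩ s hs
      simp only at this
      rw [← this, hsucc]
      exact ih hk' s hs
  have := key m (le_refl m)
  simpa [hψ0] using this
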